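/- Let α > 1, k ≥ 1 an integer, β = 1/(α-1), and φ'(r) = [((1-r^(k+1))^(-β) - 1)/r]^(1/k) on (0,1). Then φ''(r) > 0 for all r ∈ (0,1), i.e. φ' is strictly increasing on (0,1). -/

import Mathlib

lemma g3_pos (β s : ℝ) (k : ℕ) (hβ : 0 < β) (hk : 1 ≤ k) (hs : 0 < s) (hs1 : s < 1) :
    0 < β * ((k : ℝ) + 1) * (1 - s) - s + s ^ (β + 1) := by
  have hsβ : (1 : ℝ) + β * Real.log s ≤ s ^ β := by
    rw [Real.rpow_def_of_pos hs]
    nlinarith [Real.add_one_le_exp (Real.log s * β)]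
  have hlog : s - 1 ≤ s * Real.log s := by
    have h := Real.log_le_sub_one_of_pos (show (0:ℝ) < s⁻¹ by positivity)
    rw [Real.log_inv] at h
    have h2 : s * (-Real.log s) ≤ s * (s⁻¹ - 1) := by
      exact mul_le_mul_of_nonneg_left h hs.le
    have h3 : s * s⁻¹ = 1 := mul_inv_cancel₀ hs.ne'
    nlinarith
  have hsum : s ^ (β + 1) = s ^ β * s := by
    rw [Real.rpow_add hs, Real.rpow_one]
  have hk1 : (1:ℝ) ≤ (k : ℝ) := by exact_mod_cast hk
  have hb1 : 0 < β * (1 - s) := mul_pos hβ (by linarith)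
  have hbk : β * (1 - s) * 1 ≤ β * (1 - s) * (k : ℝ) :=
    mul_le_mul_of_nonneg_left hk1 hb1.le
  have hA : s + β * (s - 1) ≤ s ^ (β + 1) := by
    have h1 := mul_le_mul_of_nonneg_right hsβ hs.le
    have h2 := mul_le_mul_of_nonneg_left hlog hβ.le
    nlinarith
  nlinarith

theorem stmt_6 (α : ℝ) (k : ℕ) (hα : 1 < α) (hk : 1 ≤ k)
    (β : ℝ) (hβ : β = 1 / (α - 1))
    (φd : ℝ → ℝ)
    (hφd : ∀ r, φd r = (((1 - r ^ (k + 1)) ^ (-β) - 1) / r) ^ ((1 : ℝ) / k)) :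
    (∀ r ∈ Set.Ioo (0 : ℝ) 1, 0 < deriv φd r) ∧
      StrictMonoOn φd (Set.Ioo (0 : ℝ) 1) := by
  have hβ0 : 0 < β := by rw [hβ]; exact div_pos one_pos (by linarith)
  have hφ : φd = fun r => (((1 - r ^ (k + 1)) ^ (-β) - 1) / r) ^ ((1 : ℝ) / k) :=
    funext hφd
  subst hφ
  have key : ∀ r ∈ Set.Ioo (0:ℝ) 1, ∃ d, 0 < d ∧
      HasDerivAt (fun r : ℝ => (((1 - r ^ (k + 1)) ^ (-β) - 1) / r) ^ ((1 : ℝ) / k)) d r := by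
    intro r hr
    obtain ⟨hr0, hr1⟩ := hr
    have ht0 : 0 < r ^ (k+1) := pow_pos hr0 _
    have ht1 : r ^ (k+1) < 1 := pow_lt_one₀ hr0.le hr1 (Nat.succ_ne_zero k)
    have hu0 : 0 < 1 - r ^ (k+1) := by linarith
    -- derivative of the inner function
    have h1 : HasDerivAt (fun x : ℝ => 1 - x ^ (k+1)) (-((k+1 : ℕ) * r ^ k)) r := by
      simpa using (hasDerivAt_pow (k+1) r).const_sub 1
    have h2 : HasDerivAt (fun x : ℝ => (1 - x ^ (k+1)) ^ (-β))
        (-((k+1 : ℕ) * r ^ k) * (-β) * (1 - r ^ (k+1)) ^ (-β - 1)) r :=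
      h1.rpow_const (Or.inl hu0.ne')
    have h3 : HasDerivAt (fun x : ℝ => (1 - x ^ (k+1)) ^ (-β) - 1)
        (-((k+1 : ℕ) * r ^ k) * (-β) * (1 - r ^ (k+1)) ^ (-β - 1)) r :=
      h2.sub_const 1
    have h4 : HasDerivAt (fun x : ℝ => ((1 - x ^ (k+1)) ^ (-β) - 1) / x)
        ((-((k+1 : ℕ) * r ^ k) * (-β) * (1 - r ^ (k+1)) ^ (-β - 1) * r -
          ((1 - r ^ (k+1)) ^ (-β) - 1) * 1) / r ^ 2) r := by
      simpa using h3.fun_div (hasDerivAt_id r) hr0.ne'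
    -- positivity of the numerator
    have e1 : (1 - r ^ (k+1)) ^ (-β - 1) * (1 - r ^ (k+1)) ^ (β + 1) = 1 := by
      rw [← Real.rpow_add hu0]
      norm_num
    have e2 : (1 - r ^ (k+1)) ^ (-β) * (1 - r ^ (k+1)) ^ (β + 1) = 1 - r ^ (k+1) := by
      rw [← Real.rpow_add hu0]
      have : -β + (β + 1) = 1 := by ring
      rw [this, Real.rpow_one]
    have hrk : r ^ k * r = r ^ (k+1) := (pow_succ r k).symm
    have hcpos : 0 < (1 - r ^ (k+1)) ^ (β + 1) := Real.rpow_pos_of_pos hu0 _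
    have hg3 := g3_pos β (1 - r ^ (k+1)) k hβ0 hk hu0 (by linarith)
    have hmul : (-((k+1 : ℕ) * r ^ k) * (-β) * (1 - r ^ (k+1)) ^ (-β - 1) * r -
          ((1 - r ^ (k+1)) ^ (-β) - 1) * 1) * (1 - r ^ (k+1)) ^ (β + 1) =
        β * ((k : ℝ) + 1) * r ^ (k+1) - (1 - r ^ (k+1)) + (1 - r ^ (k+1)) ^ (β + 1) := by
      push_cast
      linear_combination (β * ((k : ℝ) + 1) * (1 - r ^ (k+1)) ^ (-β - 1) *
          (1 - r ^ (k+1)) ^ (β + 1)) * hrk +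
        (β * ((k : ℝ) + 1) * r ^ (k+1)) * e1 - e2
    have hN : 0 < -((k+1 : ℕ) * r ^ k) * (-β) * (1 - r ^ (k+1)) ^ (-β - 1) * r -
        ((1 - r ^ (k+1)) ^ (-β) - 1) * 1 := by
      nlinarith [hmul, hg3, hcpos]
    have hden : 0 < ((1 - r ^ (k+1)) ^ (-β) - 1) / r := by
      apply div_pos _ hr0
      have : (1:ℝ) < (1 - r ^ (k+1)) ^ (-β) :=
        (Real.one_lt_rpow_iff_of_pos hu0).mpr (Or.inr ⟨by linarith, by linarith⟩)
      linarith
    have h5 := h4.rpow_const (p := (1 : ℝ) / k) (Or.inl hden.ne')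
    refine ⟨_, ?_, h5⟩
    have hk0 : (0:ℝ) < (k:ℝ) := by exact_mod_cast hk
    have hderivpos : 0 < (-((k+1 : ℕ) * r ^ k) * (-β) * (1 - r ^ (k+1)) ^ (-β - 1) * r -
        ((1 - r ^ (k+1)) ^ (-β) - 1) * 1) / r ^ 2 := div_pos hN (by positivity)
    have hpow : 0 < (((1 - r ^ (k+1)) ^ (-β) - 1) / r) ^ ((1:ℝ)/k - 1) :=
      Real.rpow_pos_of_pos hden _
    positivity
  constructor
  · intro r hr
    obtain ⟨d, hd, hder⟩ := key r hr
    rw [hder.deriv]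
    exact hd
  · apply strictMonoOn_of_deriv_pos (convex_Ioo 0 1)
    · intro x hx
      obtain ⟨d, hd, hder⟩ := key x hx
      exact hder.differentiableAt.continuousAt.continuousWithinAt
    · intro x hx
      rw [interior_Ioo] at hx
      obtain ⟨d, hd, hder⟩ := key x hx
      rw [hder.deriv]
      exact hd
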